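/- Let n ≥ 0 and define F : ℤ × ℤ → ℕ by F(x,y) = 0 if x < 0 or y < 0, F(0,0) = 2^n, and F(x,y) = ⌊F(x-1,y)/2⌋ + ⌊F(x,y-1)/2⌋ otherwise. Then for all x, y ≥ 0 with x + y ≤ n, we have F(x,y) = 2^{n-x-y} · C(x+y, x), where C denotes the binomial coefficient. -/
import Mathlib


theorem stmt2 (n : ℕ) (F : ℤ → ℤ → ℕ)
    (hneg : ∀ x y : ℤ, x < 0 ∨ y < 0 → F x y = 0)
    (hzero : F 0 0 = 2 ^ n)
    (hrec : ∀ x y : ℤ, 0 ≤ x → 0 ≤ y → ¬(x = 0 ∧ y = 0) →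
      F x y = F (x - 1) y / 2 + F x (y - 1) / 2) :
    ∀ x y : ℤ, 0 ≤ x → 0 ≤ y → x + y ≤ (n : ℤ) →
      F x y = 2 ^ (n - (x + y).toNat) * Nat.choose (x + y).toNat x.toNat := by
  have key : ∀ s : ℕ, s ≤ n → ∀ a b : ℕ, a + b = s →
      F a b = 2 ^ (n - s) * Nat.choose s a := by
    intro s
    induction s with
    | zero =>
      intro _ a b hab
      obtain ⟨ha, hb⟩ := Nat.add_eq_zero.mp hab
      subst ha; subst hb
      simpa using hzero
    | succ m ih =>
      intro hs a b hab
      have hm : m ≤ n := Nat.le_of_succ_le hs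
      have h2exp : 2 ^ (n - m) = 2 * 2 ^ (n - (m + 1)) := by
        rw [show n - m = (n - (m + 1)) + 1 from by omega, pow_succ]; ring
      have hnz : ¬((a : ℤ) = 0 ∧ (b : ℤ) = 0) := by
        rintro ⟨h1, h2⟩
        simp only [Int.natCast_eq_zero] at h1 h2
        omega
      have hr := hrec a b (Int.natCast_nonneg a) (Int.natCast_nonneg b) hnz
      rcases Nat.eq_zero_or_pos a with ha | ha
      · subst ha
        have hb1 : 1 ≤ b := by omega
        have hF1 : F ((0:ℤ) - 1) b = 0 := hneg _ _ (Or.inl (by norm_num))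
        have hcast : ((b : ℤ) - 1) = ((b - 1 : ℕ) : ℤ) := by
          push_cast [hb1]; ring
        have hF2 : F 0 ((b:ℤ) - 1) = 2 ^ (n - m) * Nat.choose m 0 := by
          rw [hcast]
          exact_mod_cast ih hm 0 (b - 1) (by omega)
        simp only [Nat.cast_zero] at hr ⊢
        rw [hr, hF1, hF2, Nat.choose_zero_right, Nat.choose_zero_right, h2exp,
          Nat.mul_one, Nat.mul_one, Nat.mul_div_cancel_left _ (by norm_num : 0 < 2),
          Nat.zero_div, Nat.zero_add]
      · rcases Nat.eq_zero_or_pos b with hb | hb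
        · subst hb
          have ha1 : 1 ≤ a := by omega
          have hF2 : F a ((0:ℤ) - 1) = 0 := hneg _ _ (Or.inr (by norm_num))
          have hcast : ((a : ℤ) - 1) = ((a - 1 : ℕ) : ℤ) := by
            push_cast [ha1]; ring
          have hF1 : F ((a:ℤ) - 1) 0 = 2 ^ (n - m) * Nat.choose m (a - 1) := by
            rw [hcast]
            exact_mod_cast ih hm (a - 1) 0 (by omega)
          have hc1 : Nat.choose m (a - 1) = 1 := by
            rw [show a - 1 = m from by omega, Nat.choose_self]
          have hc2 : Nat.choose (m + 1) a = 1 := by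
            rw [show a = m + 1 from by omega, Nat.choose_self]
          simp only [Nat.cast_zero] at hr ⊢
          rw [hr, hF1, hF2, hc1, hc2, h2exp, Nat.mul_one, Nat.mul_one,
            Nat.mul_div_cancel_left _ (by norm_num : 0 < 2),
            Nat.zero_div, Nat.add_zero]
        · obtain ⟨a', rfl⟩ : ∃ a', a = a' + 1 := ⟨a - 1, by omega⟩
          have hca : ((a' + 1 : ℕ) : ℤ) - 1 = ((a' : ℕ) : ℤ) := by push_cast; ring
          have hcb : ((b : ℤ) - 1) = ((b - 1 : ℕ) : ℤ) := by
            push_cast [hb]; ring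
          have hF1 : F (((a' + 1 : ℕ) : ℤ) - 1) b = 2 ^ (n - m) * Nat.choose m a' := by
            rw [hca]; exact_mod_cast ih hm a' b (by omega)
          have hF2 : F ((a' + 1 : ℕ) : ℤ) ((b:ℤ) - 1) =
              2 ^ (n - m) * Nat.choose m (a' + 1) := by
            rw [hcb]; exact_mod_cast ih hm (a' + 1) (b - 1) (by omega)
          rw [hr, hF1, hF2, h2exp, Nat.mul_assoc, Nat.mul_assoc,
            Nat.mul_div_cancel_left _ (by norm_num : 0 < 2),
            Nat.mul_div_cancel_left _ (by norm_num : 0 < 2),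
            ← Nat.mul_add, Nat.choose_succ_succ]
  intro x y hx hy hxy
  obtain ⟨a, rfl⟩ := Int.eq_ofNat_of_zero_le hx
  obtain ⟨b, rfl⟩ := Int.eq_ofNat_of_zero_le hy
  have hs : a + b ≤ n := by exact_mod_cast hxy
  have h1 : ((a : ℤ) + b).toNat = a + b := by omega
  have h2 : ((a : ℤ)).toNat = a := by omega
  rw [h1, h2]
  exact key (a + b) hs a b rfl
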